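/- For any template Γ, the length satisfies l(Γ) ≤ δ(Γ) + 1, where l(Γ) is the number of vertices minus one and δ(Γ) = ∑_{edges i→j} ((j−i)w(e) − 1) is the cogenus. -/
import Mathlib


/-- A template: a directed graph on vertices `{0, ..., l}` (`l ≥ 1`), possibly with
multiple edges, recorded as a multiset of triples `(i, j, w)` meaning an edge `i → j`
of weight `w`, such that `i < j`, `j ≤ l`, `w > 0`, every edge between consecutive
vertices has weight at least 2, and every intermediate vertex is covered by an edge. -/
structure Template where
  l : ℕ
  edges : Multiset (ℕ × ℕ × ℕ)
  one_le_l : 1 ≤ l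
  lt_of_mem : ∀ e ∈ edges, e.1 < e.2.1
  le_l : ∀ e ∈ edges, e.2.1 ≤ l
  w_pos : ∀ e ∈ edges, 0 < e.2.2
  short_two : ∀ e ∈ edges, e.2.1 = e.1 + 1 → 2 ≤ e.2.2
  covered : ∀ j, 1 ≤ j → j + 1 ≤ l → ∃ e ∈ edges, e.1 < j ∧ j < e.2.1

/-- The cogenus `δ(Γ) = ∑_{edges i→j} ((j−i)·w(e) − 1)`. -/
def Template.cogenus (Γ : Template) : ℕ :=
  (Γ.edges.map (fun e => (e.2.1 - e.1) * e.2.2 - 1)).sum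

/-- `κ_j(Γ)`: the sum of the weights of edges `i → k` with `i < j ≤ k`. -/
def Template.kappa (Γ : Template) (j : ℕ) : ℕ :=
  ((Γ.edges.filter (fun e => e.1 < j ∧ j ≤ e.2.1)).map (fun e => e.2.2)).sum

/-- The multiplicity `μ(Γ) = ∏_e w(e)²`. -/
def Template.mult (Γ : Template) : ℕ :=
  (Γ.edges.map (fun e => e.2.2 ^ 2)).prod

/-- For any template `Γ`, the length satisfies `l(Γ) ≤ δ(Γ) + 1`. -/
theorem length_le_cogenus_add_one (Γ : Template) :
    Γ.l ≤ Γ.cogenus + 1 := by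
  have key : Finset.Ico 1 Γ.l ⊆
      Γ.edges.toFinset.biUnion (fun e => Finset.Ioo e.1 e.2.1) := by
    intro j hj
    simp only [Finset.mem_Ico] at hj
    obtain ⟨e, he, h1, h2⟩ := Γ.covered j hj.1 hj.2
    exact Finset.mem_biUnion.2 ⟨e, Multiset.mem_toFinset.2 he, Finset.mem_Ioo.2 ⟨h1, h2⟩⟩
  have h1 : Γ.l - 1 ≤ ∑ e ∈ Γ.edges.toFinset, (e.2.1 - e.1 - 1) := by
    calc Γ.l - 1 = (Finset.Ico 1 Γ.l).card := by simp
      _ ≤ (Γ.edges.toFinset.biUnion (fun e => Finset.Ioo e.1 e.2.1)).card :=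
          Finset.card_le_card key
      _ ≤ ∑ e ∈ Γ.edges.toFinset, (Finset.Ioo e.1 e.2.1).card := Finset.card_biUnion_le
      _ = ∑ e ∈ Γ.edges.toFinset, (e.2.1 - e.1 - 1) := by
          apply Finset.sum_congr rfl; intro e _; simp [Nat.card_Ioo]
  have h2 : ∑ e ∈ Γ.edges.toFinset, (e.2.1 - e.1 - 1) ≤ Γ.cogenus := by
    rw [Template.cogenus, Finset.sum_multiset_map_count]
    apply Finset.sum_le_sum
    intro e he
    have hc : 1 ≤ Γ.edges.count e := (Multiset.one_le_count_iff_mem).2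
      (Multiset.mem_toFinset.1 he)
    have hw : 1 ≤ e.2.2 := Γ.w_pos e (Multiset.mem_toFinset.1 he)
    have : e.2.1 - e.1 - 1 ≤ (e.2.1 - e.1) * e.2.2 - 1 := by
      have : e.2.1 - e.1 ≤ (e.2.1 - e.1) * e.2.2 := Nat.le_mul_of_pos_right _ hw
      omega
    calc e.2.1 - e.1 - 1 ≤ (e.2.1 - e.1) * e.2.2 - 1 := this
      _ = 1 * ((e.2.1 - e.1) * e.2.2 - 1) := (one_mul _).symm
      _ ≤ Γ.edges.count e * ((e.2.1 - e.1) * e.2.2 - 1) := Nat.mul_le_mul_right _ hc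
      _ = Γ.edges.count e • ((e.2.1 - e.1) * e.2.2 - 1) := (smul_eq_mul ..).symm
  have := Γ.one_le_l
  omega
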